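/- In the setting of a strongly monotone (constant α), Lipschitz continuous (constant L) potential operator with energy E, suppose the iteration Φ_H satisfies the norm contraction ‖u⋆_H − Φ_H(v)‖ ≤ q‖u⋆_H − v‖ with q² = 1 − α²/L². Then E(Φ_H(v)) − E(u⋆_H) ≤ (L/α)q²·(E(v) − E(u⋆_H)) for all v ∈ X_H. Moreover, (L/α)q² = L/α − α/L < 1 if and only if L/α < (1+√5)/2. -/

import Mathlib

/-- Norm contraction with `q² = 1 - α²/L²` implies energy contraction with the
modified factor `(L/α)q² = L/α - α/L`, which is `< 1` iff `L/α` is below the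
golden ratio. -/
theorem energy_contraction_from_norm_contraction
    {H : Type*} [NormedAddCommGroup H] [NormedSpace ℝ H]
    (E : H → ℝ) (X : Set H) (uH : H) (huH : uH ∈ X)
    (α L q : ℝ) (hα : 0 < α) (hαL : α ≤ L) (hq : q ^ 2 = 1 - α ^ 2 / L ^ 2)
    (henergy : ∀ v ∈ X, α / 2 * ‖uH - v‖ ^ 2 ≤ E v - E uH ∧
      E v - E uH ≤ L / 2 * ‖uH - v‖ ^ 2)
    (Φ : H → H) (hΦX : ∀ v ∈ X, Φ v ∈ X)
    (hctr : ∀ v ∈ X, ‖uH - Φ v‖ ≤ q * ‖uH - v‖) :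
    (∀ v ∈ X, E (Φ v) - E uH ≤ L / α * q ^ 2 * (E v - E uH)) ∧
    L / α * q ^ 2 = L / α - α / L ∧
    (L / α - α / L < 1 ↔ L / α < (1 + Real.sqrt 5) / 2) := by
  have hL : 0 < L := lt_of_lt_of_le hα hαL
  refine ⟨?_, ?_, ?_⟩
  · intro v hv
    obtain ⟨h1, h2⟩ := henergy v hv
    obtain ⟨h1', h2'⟩ := henergy (Φ v) (hΦX v hv)
    have hc := hctr v hv
    have hsq : ‖uH - Φ v‖ ^ 2 ≤ q ^ 2 * ‖uH - v‖ ^ 2 := by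
      have := pow_le_pow_left₀ (norm_nonneg _) hc 2
      calc ‖uH - Φ v‖ ^ 2 ≤ (q * ‖uH - v‖) ^ 2 := this
        _ = q ^ 2 * ‖uH - v‖ ^ 2 := by ring
    have hq2 : 0 ≤ q ^ 2 := sq_nonneg q
    have hnv : ‖uH - v‖ ^ 2 ≤ 2 / α * (E v - E uH) := by
      rw [div_mul_eq_mul_div, le_div_iff₀ hα]
      nlinarith
    calc E (Φ v) - E uH ≤ L / 2 * ‖uH - Φ v‖ ^ 2 := h2'
      _ ≤ L / 2 * (q ^ 2 * ‖uH - v‖ ^ 2) := by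
          apply mul_le_mul_of_nonneg_left hsq (by positivity)
      _ ≤ L / 2 * (q ^ 2 * (2 / α * (E v - E uH))) := by
          apply mul_le_mul_of_nonneg_left _ (by positivity)
          exact mul_le_mul_of_nonneg_left hnv hq2
      _ = L / α * q ^ 2 * (E v - E uH) := by field_simp
  · rw [hq]; field_simp
  · have h5 : Real.sqrt 5 ^ 2 = 5 := Real.sq_sqrt (by norm_num)
    have h5n : 0 ≤ Real.sqrt 5 := Real.sqrt_nonneg 5
    have hx1 : (1:ℝ) ≤ L / α := (one_le_div hα).mpr hαL
    have hx0 : (0:ℝ) < L / α := by positivity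
    set x := L / α
    have hal : α / L = 1 / x := by simp only [x, one_div_div]
    rw [hal]
    constructor
    · intro h
      have hx2 : x ^ 2 - x - 1 < 0 := by
        have := (sub_lt_iff_lt_add).mp h
        have h' : x - 1 / x < 1 := h
        nlinarith [mul_pos hx0 hx0, div_mul_cancel₀ (1:ℝ) (ne_of_gt hx0)]
      nlinarith
    · intro h
      have hx2 : x ^ 2 - x - 1 < 0 := by nlinarith
      have : x ^ 2 < x + 1 := by linarith
      have h1x : 1 / x * x = 1 := by field_simp
      nlinarith
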